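/- (Triangle rule for extreme points) Let E be an edge set on {1,…,n} containing all three edges {i,j}, {j,k}, {i,k} of a triangle, let ρ0 ∈ ℝ^n, and let ρ ∈ A(ρ0, E) satisfy ρ_i < ρ_j < ρ_k and ρ_i + ρ_k ≠ 2ρ_j. Then B_{ik}(ρ) is not an extreme point of the diffusion polytope DP(ρ0, E): it is a strict convex combination of two distinct points of DP(ρ0, E), namely the point obtained from ρ by replacing each of the components i, j, k by their average (ρ_i+ρ_j+ρ_k)/3, and (if ρ_i+ρ_k < 2ρ_j) the attainable point B_{ik}(B_{jk}(ρ)), respectively (if ρ_i+ρ_k > 2ρ_j) the attainable point B_{ik}(B_{ij}(ρ)). -/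

import Mathlib

/-- The averaging operator `B_{ij}` : averages the populations at vertices `i` and `j`,
leaving the other components unchanged. -/
noncomputable def avg {n : ℕ} (i j : Fin n) (ρ : Fin n → ℝ) : Fin n → ℝ :=
  fun k => if k = i ∨ k = j then (ρ i + ρ j) / 2 else ρ k

/-- The attainable set `A(ρ0, E)`: all vectors obtained from `ρ0` by applying a finite
sequence of operators `B_{ij}` with `{i,j} ∈ E` (and `i ≠ j`). -/
def attainable (n : ℕ) (E : Set (Sym2 (Fin n))) (ρ0 : Fin n → ℝ) : Set (Fin n → ℝ) :=
  {ρ | ∃ L : List (Fin n × Fin n),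
    (∀ p ∈ L, p.1 ≠ p.2 ∧ s(p.1, p.2) ∈ E) ∧
    ρ = L.foldl (fun σ p => avg p.1 p.2 σ) ρ0}

/-- The edge set of the path graph `P_n` (0-based: edges `{i, i+1}` for `i+1 < n`). -/
def pathEdges (n : ℕ) : Set (Sym2 (Fin n)) :=
  {e | ∃ i : ℕ, ∃ h : i + 1 < n, e = s(⟨i, Nat.lt_of_succ_lt h⟩, ⟨i + 1, h⟩)}

/-- Start of the block of index `j` determined by `A` (0-based: `i ∈ A` means indices
`i` and `i+1` lie in the same block): the least `a` with `[a, j) ⊆ A`. -/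
def blockStart (A : Finset ℕ) (j : ℕ) : ℕ :=
  Nat.findGreatest (fun a => a ≠ 0 ∧ (a - 1) ∉ A) j

/-- End of the block of index `j` determined by `A`: the greatest `b ≤ n - 1`
with `[j, b) ⊆ A`. -/
def blockEnd (n : ℕ) (A : Finset ℕ) (j : ℕ) : ℕ :=
  Nat.findGreatest (fun b => ∀ m ∈ Finset.Ico j b, m ∈ A) (n - 1)

/-- The point `S_A`: on each block of consecutive indices determined by `A`, its
components all equal the average of the components of `ρ0` over that block. -/
noncomputable def SA {n : ℕ} (ρ0 : Fin n → ℝ) (A : Finset ℕ) : Fin n → ℝ :=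
  fun j =>
    (∑ m ∈ Finset.Icc (blockStart A (j : ℕ)) (blockEnd n A (j : ℕ)),
        if h : m < n then ρ0 ⟨m, h⟩ else 0) /
      ((blockEnd n A (j : ℕ) - blockStart A (j : ℕ) + 1 : ℕ) : ℝ)

/-- Apply the adjacent averaging operator `B_{p,p+1}` (0-based) if it exists. -/
noncomputable def stepAt (n : ℕ) (p : ℕ) (ρ : Fin n → ℝ) : Fin n → ℝ :=
  if h : p + 1 < n then avg ⟨p, Nat.lt_of_succ_lt h⟩ ⟨p + 1, h⟩ ρ else ρ

lemma attainable_avg {n : ℕ} {E : Set (Sym2 (Fin n))} {ρ0 ρ : Fin n → ℝ}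
    (h : ρ ∈ attainable n E ρ0) {p q : Fin n} (hpq : p ≠ q) (hE : s(p,q) ∈ E) :
    avg p q ρ ∈ attainable n E ρ0 := by
  obtain ⟨L, hL, rfl⟩ := h
  refine ⟨L ++ [(p,q)], ?_, ?_⟩
  · intro x hx
    rcases List.mem_append.mp hx with h | h
    · exact hL x h
    · simp only [List.mem_singleton] at h; subst h; exact ⟨hpq, hE⟩
  · simp [List.foldl_append]

lemma round_apply {n : ℕ} {i j k : Fin n} (hij : i ≠ j) (hjk : j ≠ k) (hik : i ≠ k)
    (ρ : Fin n → ℝ) :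
    avg i k (avg j k (avg i j ρ)) = fun p =>
      if p = j then (ρ i + ρ j + 2 * ρ k) / 4
      else if p = i ∨ p = k then (3 * ρ i + 3 * ρ j + 2 * ρ k) / 8
      else ρ p := by
  funext p
  have hji := hij.symm; have hkj := hjk.symm; have hki := hik.symm
  by_cases hpj : p = j <;> by_cases hpi : p = i <;> by_cases hpk : p = k <;>
    simp_all [avg] <;> ring

noncomputable def roundSeq {n : ℕ} (i j k : Fin n) (ρ : Fin n → ℝ) : ℕ → (Fin n → ℝ)
  | 0 => ρ
  | (m+1) => avg i k (avg j k (avg i j (roundSeq i j k ρ m)))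

lemma roundSeq_formula {n : ℕ} {i j k : Fin n} (hij : i ≠ j) (hjk : j ≠ k) (hik : i ≠ k)
    (ρ : Fin n → ℝ) (m : ℕ) :
    roundSeq i j k ρ (m+1) = fun p =>
      if p = i ∨ p = j ∨ p = k then
        (ρ i + ρ j + ρ k) / 3 +
          (if p = j then (-2 : ℝ) else 1) * (ρ k - (ρ i + ρ j + ρ k) / 3) * (-(1/8)) ^ (m+1)
      else ρ p := by
  induction m with
  | zero =>
    show avg i k (avg j k (avg i j ρ)) = _
    rw [round_apply hij hjk hik]
    funext p
    have hji := hij.symm; have hkj := hjk.symm; have hki := hik.symm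
    by_cases hpj : p = j <;> by_cases hpi : p = i <;> by_cases hpk : p = k <;>
      simp_all <;> ring
  | succ m ih =>
    show avg i k (avg j k (avg i j (roundSeq i j k ρ (m+1)))) = _
    rw [round_apply hij hjk hik, ih]
    funext p
    have hji := hij.symm; have hkj := hjk.symm; have hki := hik.symm
    by_cases hpj : p = j <;> by_cases hpi : p = i <;> by_cases hpk : p = k <;>
      simp_all [pow_succ] <;> ring

/-- Triangle rule for extreme points: if the edge set contains all three edges of a
triangle `{i,j}, {j,k}, {i,k}`, and `ρ` is attainable with `ρ_i < ρ_j < ρ_k` and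
`ρ_i + ρ_k ≠ 2ρ_j`, then `B_{ik}(ρ)` is not an extreme point of the diffusion polytope:
it is a strict convex combination of two distinct points of the polytope, namely the
point obtained by averaging the three components `i, j, k` of `ρ` and (according to the
sign of `ρ_i + ρ_k − 2ρ_j`) the attainable point `B_{ik}(B_{jk}(ρ))` or
`B_{ik}(B_{ij}(ρ))`. -/
theorem triangle_rule (n : ℕ) (E : Set (Sym2 (Fin n))) (ρ0 : Fin n → ℝ)
    (i j k : Fin n) (hij : i ≠ j) (hjk : j ≠ k) (hik : i ≠ k)
    (hEij : s(i, j) ∈ E) (hEjk : s(j, k) ∈ E) (hEik : s(i, k) ∈ E)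
    (ρ : Fin n → ℝ) (hρ : ρ ∈ attainable n E ρ0)
    (h1 : ρ i < ρ j) (h2 : ρ j < ρ k) (h3 : ρ i + ρ k ≠ 2 * ρ j) :
    avg i k ρ ∉
      Set.extremePoints ℝ (closure (convexHull ℝ (attainable n E ρ0))) ∧
    ∃ lam : ℝ, 0 < lam ∧ lam < 1 ∧
      (fun m => if m = i ∨ m = j ∨ m = k then (ρ i + ρ j + ρ k) / 3 else ρ m) ∈
        closure (convexHull ℝ (attainable n E ρ0)) ∧
      (if ρ i + ρ k < 2 * ρ j then avg i k (avg j k ρ) else avg i k (avg i j ρ)) ∈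
        attainable n E ρ0 ∧
      (fun m => if m = i ∨ m = j ∨ m = k then (ρ i + ρ j + ρ k) / 3 else ρ m) ≠
        (if ρ i + ρ k < 2 * ρ j then avg i k (avg j k ρ) else avg i k (avg i j ρ)) ∧
      avg i k ρ =
        lam • (fun m => if m = i ∨ m = j ∨ m = k then (ρ i + ρ j + ρ k) / 3 else ρ m) +
        (1 - lam) •
          (if ρ i + ρ k < 2 * ρ j then avg i k (avg j k ρ) else avg i k (avg i j ρ)) := by
  have hji := hij.symm; have hkj := hjk.symm; have hki := hik.symm
  set P : Fin n → ℝ :=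
    (fun m => if m = i ∨ m = j ∨ m = k then (ρ i + ρ j + ρ k) / 3 else ρ m) with hPdef
  set q : Fin n → ℝ :=
    (if ρ i + ρ k < 2 * ρ j then avg i k (avg j k ρ) else avg i k (avg i j ρ)) with hqdef
  -- membership of P in the closure
  have hmem : ∀ m, roundSeq i j k ρ m ∈ attainable n E ρ0 := by
    intro m
    induction m with
    | zero => exact hρ
    | succ m ih =>
      exact attainable_avg (attainable_avg (attainable_avg ih hij hEij) hjk hEjk) hik hEik
  have htend : Filter.Tendsto (fun m => roundSeq i j k ρ (m+1)) Filter.atTop (nhds P) := by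
    rw [tendsto_pi_nhds]
    intro p
    have h8 : |(-(1/8) : ℝ)| < 1 := by rw [abs_neg]; rw [abs_of_pos] <;> norm_num
    have h0 : Filter.Tendsto (fun m : ℕ => ((-(1/8):ℝ)) ^ (m+1)) Filter.atTop (nhds 0) :=
      (tendsto_pow_atTop_nhds_zero_of_abs_lt_one h8).comp (Filter.tendsto_add_atTop_nat 1)
    by_cases hp : p = i ∨ p = j ∨ p = k
    · have hval : ∀ m : ℕ, roundSeq i j k ρ (m+1) p =
          (ρ i + ρ j + ρ k) / 3 +
            ((if p = j then (-2 : ℝ) else 1) * (ρ k - (ρ i + ρ j + ρ k) / 3)) * (-(1/8)) ^ (m+1) := by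
        intro m
        rw [roundSeq_formula hij hjk hik]
        simp only [if_pos hp]
        try ring
      have hPp : P p = (ρ i + ρ j + ρ k) / 3 := by
        rw [hPdef]; simp only [if_pos hp]
      simp only [hval, hPp]
      simpa using tendsto_const_nhds.add
        (h0.const_mul ((if p = j then (-2 : ℝ) else 1) * (ρ k - (ρ i + ρ j + ρ k) / 3)))
    · have hval : ∀ m : ℕ, roundSeq i j k ρ (m+1) p = ρ p := by
        intro m
        rw [roundSeq_formula hij hjk hik]
        simp only [if_neg hp]
      have hPp : P p = ρ p := by rw [hPdef]; simp only [if_neg hp]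
      simp only [hval, hPp]
      exact tendsto_const_nhds
  have hP : P ∈ closure (convexHull ℝ (attainable n E ρ0)) :=
    mem_closure_of_tendsto htend
      (Filter.Eventually.of_forall fun m => subset_convexHull ℝ _ (hmem (m+1)))
  -- the convex combination
  obtain ⟨lam, hl0, hl1, hq, hne, heq⟩ :
      ∃ lam : ℝ, 0 < lam ∧ lam < 1 ∧ q ∈ attainable n E ρ0 ∧ P ≠ q ∧
        avg i k ρ = lam • P + (1 - lam) • q := by
    by_cases hc : ρ i + ρ k < 2 * ρ j
    · refine ⟨3 * (ρ k - ρ j) / (ρ j + ρ k - 2 * ρ i), ?_, ?_, ?_, ?_, ?_⟩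
      · apply div_pos <;> linarith
      · rw [div_lt_one (by linarith)]; linarith
      · rw [hqdef, if_pos hc]
        exact attainable_avg (attainable_avg hρ hjk hEjk) hik hEik
      · intro h
        have hthis := congrFun h j
        rw [hPdef, hqdef, if_pos hc] at hthis
        simp [avg, hji, hjk] at hthis
        linarith
      · have hd : ρ j + ρ k - 2 * ρ i ≠ 0 := by
          have : ρ i < ρ k := lt_trans h1 h2
          intro h0; linarith [h0]
        funext p
        simp only [hqdef, if_pos hc, hPdef, Pi.add_apply, Pi.smul_apply, smul_eq_mul]
        rcases eq_or_ne p i with rfl | hpi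
        · simp [avg, hij, hji, hik, hki, hjk, hkj]
          rw [mul_comm (2:ℝ)] at hd
          field_simp
          ring
        rcases eq_or_ne p j with rfl | hpj
        · simp [avg, hij, hji, hik, hki, hjk, hkj]
          field_simp
          ring
        rcases eq_or_ne p k with rfl | hpk
        · simp [avg, hij, hji, hik, hki, hjk, hkj]
          rw [mul_comm (2:ℝ)] at hd
          field_simp
          ring
        · simp [avg, hpi, hpj, hpk]
          ring
    · have hgt : 2 * ρ j < ρ i + ρ k := (not_lt.mp hc).lt_of_ne (Ne.symm h3)
      refine ⟨3 * (ρ j - ρ i) / (2 * ρ k - ρ i - ρ j), ?_, ?_, ?_, ?_, ?_⟩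
      · apply div_pos <;> linarith
      · rw [div_lt_one (by linarith)]; linarith
      · rw [hqdef, if_neg hc]
        exact attainable_avg (attainable_avg hρ hij hEij) hik hEik
      · intro h
        have hthis := congrFun h j
        rw [hPdef, hqdef, if_neg hc] at hthis
        simp [avg, hji, hjk] at hthis
        linarith
      · have hd : 2 * ρ k - ρ i - ρ j ≠ 0 := by
          have : ρ i < ρ k := lt_trans h1 h2
          intro h0; linarith [h0]
        funext p
        simp only [hqdef, if_neg hc, hPdef, Pi.add_apply, Pi.smul_apply, smul_eq_mul]
        rcases eq_or_ne p i with rfl | hpi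
        · simp [avg, hij, hji, hik, hki, hjk, hkj]
          rw [mul_comm (2:ℝ)] at hd
          field_simp
          ring
        rcases eq_or_ne p j with rfl | hpj
        · simp [avg, hij, hji, hik, hki, hjk, hkj]
          field_simp
          ring
        rcases eq_or_ne p k with rfl | hpk
        · simp [avg, hij, hji, hik, hki, hjk, hkj]
          rw [mul_comm (2:ℝ)] at hd
          field_simp
          ring
        · simp [avg, hpi, hpj, hpk]
          ring
  refine ⟨?_, lam, hl0, hl1, hP, hq, hne, heq⟩
  intro hext
  have hqcl : q ∈ closure (convexHull ℝ (attainable n E ρ0)) :=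
    subset_closure (subset_convexHull ℝ _ hq)
  have := hext.2 hP hqcl ⟨lam, 1 - lam, hl0, by linarith, by ring, heq.symm⟩
  exact hne (this.trans (hext.2 hqcl hP ⟨1 - lam, lam, by linarith, hl0, by ring, by rw [add_comm]; exact heq.symm⟩).symm)
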